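/- (Global energy stability of the Galerkin scheme.) Let m, s : Fin N → Fin N → ℝ be symmetric matrices, let a : ℝ → Fin N → Fin N → ℝ satisfy a t i j = -a t j i for all t, i, j, let c : Fin N → Fin N → E satisfy c j i = -c i j, and let ν ∈ ℝ. Suppose u : ℝ → Fin N → E is differentiable in time, p : ℝ → Fin N → ℝ, and for every t and i the consistent-mass Galerkin system holds: Σ_j m i j • (du/dt)(t) j = -Σ_j (a t i j + ν·s i j) • u t j - Σ_j p t j • c i j, together with the discrete divergence constraint Σ_j ⟪c k j, u t j⟫ = 0 for every k and t. Then for every t, the total kinetic energy E(t) := (1/2)·Σ_i Σ_j m i j·⟪u t i, u t j⟫ has derivative E'(t) = -ν·Σ_i Σ_j s i j·⟪u t i, u t j⟫. -/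

import Mathlib

open scoped RealInnerProductSpace BigOperators

/-- Global energy stability of the consistent-mass Galerkin scheme
(Remark on energy): the total kinetic energy
`E(t) = (1/2)·Σ_i Σ_j m i j·⟪u t i, u t j⟫` satisfies
`E'(t) = -ν·Σ_i Σ_j s i j·⟪u t i, u t j⟫`. -/
theorem global_energy_stability_galerkin
    (d N : ℕ) (hd : 1 ≤ d) (hN : 1 ≤ N)
    (m s : Fin N → Fin N → ℝ)
    (hm_symm : ∀ i j, m i j = m j i)
    (hs_symm : ∀ i j, s i j = s j i)
    (a : ℝ → Fin N → Fin N → ℝ)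
    (ha_skew : ∀ t i j, a t i j = -a t j i)
    (c : Fin N → Fin N → EuclideanSpace ℝ (Fin d))
    (hc : ∀ i j, c j i = -c i j)
    (ν : ℝ)
    (u : ℝ → Fin N → EuclideanSpace ℝ (Fin d))
    (u' : ℝ → Fin N → EuclideanSpace ℝ (Fin d))
    (p : ℝ → Fin N → ℝ)
    (hu' : ∀ i t, HasDerivAt (fun τ => u τ i) (u' t i) t)
    (hsys : ∀ t i, ∑ j, m i j • u' t j =
      -(∑ j, (a t i j + ν * s i j) • u t j) - ∑ j, p t j • c i j)
    (hdiv : ∀ t k, ∑ j, ⟪c k j, u t j⟫ = 0) :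
    ∀ t, HasDerivAt
      (fun τ => (1 / 2 : ℝ) * ∑ i, ∑ j, m i j * ⟪u τ i, u τ j⟫)
      (-ν * ∑ i, ∑ j, s i j * ⟪u t i, u t j⟫) t := by
  intro t
  have hD : HasDerivAt
      (fun τ => (1 / 2 : ℝ) * ∑ i, ∑ j, m i j * ⟪u τ i, u τ j⟫)
      ((1 / 2 : ℝ) * ∑ i, ∑ j, m i j * (⟪u t i, u' t j⟫ + ⟪u' t i, u t j⟫)) t := by
    apply HasDerivAt.const_mul
    apply HasDerivAt.fun_sum
    intro i _
    apply HasDerivAt.fun_sum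
    intro j _
    exact ((hu' i t).inner ℝ (hu' j t)).const_mul _
  -- key algebraic identity for one "half" of the derivative
  have key : (∑ i, ∑ j, m i j * ⟪u t i, u' t j⟫)
      = -ν * ∑ i, ∑ j, s i j * ⟪u t i, u t j⟫ := by
    have h1 : ∀ i, ∑ j, m i j * ⟪u t i, u' t j⟫ = ⟪u t i, ∑ j, m i j • u' t j⟫ := by
      intro i
      rw [inner_sum]
      refine Finset.sum_congr rfl fun j _ => ?_
      rw [real_inner_smul_right]
    have h2 : ∀ i, ⟪u t i, ∑ j, m i j • u' t j⟫
        = -(∑ j, (a t i j + ν * s i j) * ⟪u t i, u t j⟫)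
          - ∑ j, p t j * ⟪u t i, c i j⟫ := by
      intro i
      rw [hsys t i, inner_sub_right, inner_neg_right, inner_sum, inner_sum]
      congr 1
      · congr 1
        refine Finset.sum_congr rfl fun j _ => ?_
        rw [real_inner_smul_right]
      · refine Finset.sum_congr rfl fun j _ => ?_
        rw [real_inner_smul_right]
    have ha0 : (∑ i, ∑ j, a t i j * ⟪u t i, u t j⟫) = 0 := by
      have hS : (∑ i, ∑ j, a t i j * ⟪u t i, u t j⟫)
          = -(∑ i, ∑ j, a t i j * ⟪u t i, u t j⟫) := by
        conv_lhs => rw [Finset.sum_comm]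
        rw [← Finset.sum_neg_distrib]
        refine Finset.sum_congr rfl fun i _ => ?_
        rw [← Finset.sum_neg_distrib]
        refine Finset.sum_congr rfl fun j _ => ?_
        rw [ha_skew t j i, real_inner_comm]
        ring
      linarith
    have hp0 : (∑ i, ∑ j, p t j * ⟪u t i, c i j⟫) = 0 := by
      rw [Finset.sum_comm]
      refine Finset.sum_eq_zero fun j _ => ?_
      have : (∑ i, ⟪c j i, u t i⟫) = 0 := hdiv t j
      have h3 : (∑ i, ⟪u t i, c i j⟫) = 0 := by
        calc (∑ i, ⟪u t i, c i j⟫) = ∑ i, -⟪c j i, u t i⟫ := by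
              refine Finset.sum_congr rfl fun i _ => ?_
              rw [hc j i, inner_neg_right, real_inner_comm]
          _ = 0 := by rw [Finset.sum_neg_distrib, hdiv t j, neg_zero]
      rw [← Finset.mul_sum, h3, mul_zero]
    calc (∑ i, ∑ j, m i j * ⟪u t i, u' t j⟫)
        = ∑ i, (-(∑ j, (a t i j + ν * s i j) * ⟪u t i, u t j⟫)
            - ∑ j, p t j * ⟪u t i, c i j⟫) := by
          refine Finset.sum_congr rfl fun i _ => ?_
          rw [h1 i, h2 i]
      _ = -ν * ∑ i, ∑ j, s i j * ⟪u t i, u t j⟫ := by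
          rw [Finset.sum_sub_distrib, hp0, sub_zero]
          have : ∀ i, -(∑ j, (a t i j + ν * s i j) * ⟪u t i, u t j⟫)
              = -(∑ j, a t i j * ⟪u t i, u t j⟫)
                + (-ν) * ∑ j, s i j * ⟪u t i, u t j⟫ := by
            intro i
            have expand : (∑ j, (a t i j + ν * s i j) * ⟪u t i, u t j⟫)
                = (∑ j, a t i j * ⟪u t i, u t j⟫)
                  + ∑ j, ν * s i j * ⟪u t i, u t j⟫ := by
              rw [← Finset.sum_add_distrib]
              exact Finset.sum_congr rfl fun j _ => by ring
            rw [expand, neg_add]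
            congr 1
            rw [← Finset.sum_neg_distrib, Finset.mul_sum]
            exact Finset.sum_congr rfl fun j _ => by ring
          simp_rw [this]
          rw [Finset.sum_add_distrib, Finset.sum_neg_distrib, ha0, neg_zero, zero_add,
            ← Finset.mul_sum]
    done
  -- the other half equals the same thing by symmetry
  have keysym : (∑ i, ∑ j, m i j * ⟪u' t i, u t j⟫)
      = ∑ i, ∑ j, m i j * ⟪u t i, u' t j⟫ := by
    rw [Finset.sum_comm]
    refine Finset.sum_congr rfl fun i _ => Finset.sum_congr rfl fun j _ => ?_
    rw [hm_symm j i, real_inner_comm]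
  convert hD using 1
  simp_rw [mul_add, Finset.sum_add_distrib]
  rw [keysym, key]
  ring
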